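/- A set system 𝓕 ⊆ 2^[n] is s-extremal if and only if there exists a Sperner family 𝓢 ⊆ 2^[n] such that 𝓕 shatters no element of 𝓢 and |𝓕| = |𝓗(𝓢)|. -/

import Mathlib

open Finset

/-- `𝓕` shatters `S` if every subset of `S` arises as `F ∩ S` for some `F ∈ 𝓕`. -/
def ShattersFam {n : ℕ} (𝓕 : Finset (Finset (Fin n))) (S : Finset (Fin n)) : Prop :=
  𝓕.image (· ∩ S) = S.powerset

/-- The family of all subsets of `[n]` shattered by `𝓕`. -/
def ShFam {n : ℕ} (𝓕 : Finset (Finset (Fin n))) : Finset (Finset (Fin n)) :=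
  Finset.univ.filter fun S => 𝓕.image (· ∩ S) = S.powerset

/-- A set system is shattering-extremal if it shatters exactly `|𝓕|` sets. -/
def SExtremal {n : ℕ} (𝓕 : Finset (Finset (Fin n))) : Prop :=
  (ShFam 𝓕).card = 𝓕.card

/-- A Sperner family: no member contains another member. -/
def IsSperner {n : ℕ} (𝓢 : Finset (Finset (Fin n))) : Prop :=
  ∀ S ∈ 𝓢, ∀ S' ∈ 𝓢, S ⊆ S' → S = S'

/-- `Q S H = {T ⊆ [n] : T ∩ S = H}`. -/
def Q {n : ℕ} (S H : Finset (Fin n)) : Finset (Finset (Fin n)) :=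
  Finset.univ.filter fun T => T ∩ S = H

/-- `𝓗(𝓢) = {T ⊆ [n] : no S ∈ 𝓢 satisfies S ⊆ T}`. -/
def HFam {n : ℕ} (𝓢 : Finset (Finset (Fin n))) : Finset (Finset (Fin n)) :=
  Finset.univ.filter fun T => ∀ S ∈ 𝓢, ¬ S ⊆ T

/-- `𝓕(𝓢,h) = 2^[n] \ ⋃_{S ∈ 𝓢} Q_{S,h(S)}`. -/
def FFam {n : ℕ} (𝓢 : Finset (Finset (Fin n))) (h : Finset (Fin n) → Finset (Fin n)) :
    Finset (Finset (Fin n)) :=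
  Finset.univ \ 𝓢.biUnion fun S => Q S (h S)

lemma shattersFam_iff {n : ℕ} (𝓕 : Finset (Finset (Fin n))) (S : Finset (Fin n)) :
    ShattersFam 𝓕 S ↔ 𝓕.Shatters S := by
  rw [ShattersFam, Finset.shatters_iff]
  have : (· ∩ S : Finset (Fin n) → Finset (Fin n)) = fun t => S ∩ t :=
    funext fun t => inter_comm t S
  rw [this]

lemma shFam_eq {n : ℕ} (𝓕 : Finset (Finset (Fin n))) : ShFam 𝓕 = 𝓕.shatterer := by
  ext S
  simp only [ShFam, mem_filter, mem_univ, true_and, Finset.mem_shatterer,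
    ← shattersFam_iff, ShattersFam]

instance {n : ℕ} (𝓕 : Finset (Finset (Fin n))) : DecidablePred (ShattersFam 𝓕) :=
  fun _ => by unfold ShattersFam; infer_instance

lemma exists_minimal_unshattered {n : ℕ} (𝓕 : Finset (Finset (Fin n))) :
    ∀ T : Finset (Fin n), ¬ ShattersFam 𝓕 T →
      ∃ S, S ⊆ T ∧ ¬ ShattersFam 𝓕 S ∧ ∀ S' ⊂ S, ShattersFam 𝓕 S' := by
  intro T
  induction T using Finset.strongInduction with
  | _ T ih =>
    intro hT
    by_cases h : ∀ S' ⊂ T, ShattersFam 𝓕 S'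
    · exact ⟨T, Subset.rfl, hT, h⟩
    · push_neg at h
      obtain ⟨S', hS'T, hS'⟩ := h
      obtain ⟨S, hST, h1, h2⟩ := ih S' hS'T hS'
      exact ⟨S, hST.trans hS'T.subset, h1, h2⟩

/-- `𝓕` is s-extremal iff it is `𝓢`-extremal for some Sperner family `𝓢`. -/
theorem stmt_5 {n : ℕ} (𝓕 : Finset (Finset (Fin n))) :
    SExtremal 𝓕 ↔
      ∃ 𝓢 : Finset (Finset (Fin n)), IsSperner 𝓢 ∧ (∀ S ∈ 𝓢, ¬ ShattersFam 𝓕 S) ∧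
        𝓕.card = (HFam 𝓢).card := by
  constructor
  · intro h
    refine ⟨Finset.univ.filter fun S => ¬ ShattersFam 𝓕 S ∧ ∀ S' ⊂ S, ShattersFam 𝓕 S',
      ?_, ?_, ?_⟩
    · intro S hS S' hS' hsub
      simp only [mem_filter, mem_univ, true_and] at hS hS'
      by_contra hne
      exact hS.1 (hS'.2 S (hsub.ssubset_of_ne hne))
    · intro S hS
      simp only [mem_filter, mem_univ, true_and] at hS
      exact hS.1
    · have hH : HFam (Finset.univ.filter fun S => ¬ ShattersFam 𝓕 S ∧
          ∀ S' ⊂ S, ShattersFam 𝓕 S') = ShFam 𝓕 := by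
        ext T
        simp only [HFam, ShFam, mem_filter, mem_univ, true_and]
        simp only [HFam, ShFam, mem_filter, mem_univ, true_and, ← shattersFam_iff,
          ShattersFam]
        constructor
        · intro hT
          by_contra hTns
          obtain ⟨S, hST, h1, h2⟩ := exists_minimal_unshattered 𝓕 T hTns
          exact hT S ⟨h1, h2⟩ hST
        · intro hT S hS hST
          exact hS.1 ((shattersFam_iff 𝓕 S).2
            (((shattersFam_iff 𝓕 T).1 hT).mono_right hST))
      rw [hH]
      exact h.symm
  · rintro ⟨𝓢, _, hns, hcard⟩
    have h1 : 𝓕.card ≤ (ShFam 𝓕).card := by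
      rw [shFam_eq]; exact Finset.card_le_card_shatterer 𝓕
    have h2 : ShFam 𝓕 ⊆ HFam 𝓢 := by
      intro T hT
      simp only [ShFam, mem_filter, mem_univ, true_and] at hT
      simp only [HFam, mem_filter, mem_univ, true_and]
      intro S hS hST
      exact hns S hS ((shattersFam_iff 𝓕 S).2
        (((shattersFam_iff 𝓕 T).1 hT).mono_right hST))
    have := Finset.card_le_card h2
    rw [← hcard] at this
    exact le_antisymm this h1
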